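/- Let γ ∈ ℚ with v₂(γ) ≥ 0 (i.e., γ is 2-integral), and tᵢ(x) ∈ ℚ[x] defined by t₁(x) = x + γ, tᵢ(x) = (tᵢ₋₁(x) - γ)² + x + γ. Then tᵢ(x) is separable for all i ≥ 1. -/

import Mathlib

open Polynomial

/-- `tpoly γ i` is the polynomial `t_{i+1}` of the paper. -/
noncomputable def tpoly {K : Type*} [Field K] (γ : K) : ℕ → K[X]
  | 0 => Polynomial.X + Polynomial.C γ
  | i + 1 => (tpoly γ i - Polynomial.C γ) ^ 2 + Polynomial.X + Polynomial.C γ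

/-- The same recursion over any commutative ring. -/
noncomputable def Tpoly {R : Type*} [CommRing R] (γ : R) : ℕ → R[X]
  | 0 => Polynomial.X + Polynomial.C γ
  | i + 1 => (Tpoly γ i - Polynomial.C γ) ^ 2 + Polynomial.X + Polynomial.C γ

lemma tpoly_eq_Tpoly {K : Type*} [Field K] (γ : K) : ∀ i, tpoly γ i = Tpoly γ i
  | 0 => rfl
  | i + 1 => by rw [tpoly, Tpoly, tpoly_eq_Tpoly γ i]

lemma Tpoly_map {R S : Type*} [CommRing R] [CommRing S] (f : R →+* S) (γ : R) :
    ∀ i, (Tpoly γ i).map f = Tpoly (f γ) i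
  | 0 => by simp [Tpoly]
  | i + 1 => by
      simp [Tpoly, Polynomial.map_add, Polynomial.map_pow, Polynomial.map_sub,
        Tpoly_map f γ i]

lemma Tpoly_monic {R : Type*} [CommRing R] [Nontrivial R] (γ : R) :
    ∀ i, (Tpoly γ i).Monic ∧ (Tpoly γ i).natDegree = 2 ^ i
  | 0 => by
      constructor
      · simpa [Tpoly] using monic_X_add_C γ
      · simp [Tpoly, natDegree_X_add_C]
  | i + 1 => by
      obtain ⟨hm, hd⟩ := Tpoly_monic γ i
      have hdeg : (Tpoly γ i).degree = ((2 ^ i : ℕ) : WithBot ℕ) := by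
        rw [degree_eq_natDegree hm.ne_zero, hd]
      have hdegpos : (0 : WithBot ℕ) < (Tpoly γ i).degree := by
        rw [hdeg]; exact_mod_cast pow_pos (by norm_num : (0:ℕ) < 2) i
      have hCd : (C γ).degree < (Tpoly γ i).degree :=
        lt_of_le_of_lt (degree_C_le) hdegpos
      have hsub_deg : (Tpoly γ i - C γ).degree = (Tpoly γ i).degree :=
        degree_sub_eq_left_of_degree_lt hCd
      have hsub_monic : (Tpoly γ i - C γ).Monic := by
        have := hm.add_of_left (q := -C γ) (by simpa using hCd)
        simpa [sub_eq_add_neg] using this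
      have hsub_nd : (Tpoly γ i - C γ).natDegree = 2 ^ i := by
        rw [natDegree_eq_of_degree_eq hsub_deg, hd]
      have hsq_monic : ((Tpoly γ i - C γ) ^ 2).Monic := hsub_monic.pow 2
      have hsq_nd : ((Tpoly γ i - C γ) ^ 2).natDegree = 2 ^ (i + 1) := by
        rw [hsub_monic.natDegree_pow, hsub_nd, pow_succ]
        ring
      have hsq_deg : ((Tpoly γ i - C γ) ^ 2).degree = ((2 ^ (i + 1) : ℕ) : WithBot ℕ) := by
        rw [degree_eq_natDegree hsq_monic.ne_zero, hsq_nd]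
      have hlt : (X + C γ).degree < ((Tpoly γ i - C γ) ^ 2).degree := by
        rw [degree_X_add_C, hsq_deg, show ((1 : WithBot ℕ)) = ((1 : ℕ) : WithBot ℕ) from rfl]
        exact_mod_cast Nat.one_lt_two_pow_iff.mpr (by omega)
      have hrw : Tpoly γ (i + 1) = (Tpoly γ i - C γ) ^ 2 + (X + C γ) := by
        rw [Tpoly, add_assoc]
      constructor
      · rw [hrw]; exact hsq_monic.add_of_left hlt
      · rw [hrw, natDegree_eq_of_degree_eq (degree_add_eq_left_of_degree_lt hlt), hsq_nd]

lemma Tpoly_derivative {R : Type*} [CommRing R] (γ : R) (i : ℕ) :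
    ∃ Q : R[X], derivative (Tpoly γ i) = C 2 * Q + 1 := by
  cases i with
  | zero => exact ⟨0, by simp [Tpoly]⟩
  | succ n =>
      refine ⟨(Tpoly γ n - C γ) * derivative (Tpoly γ n), ?_⟩
      rw [Tpoly]
      simp [derivative_pow, mul_assoc, mul_comm, mul_left_comm]

lemma exists_common_root {K : Type*} [Field K] [IsAlgClosed K] {f : K[X]} (hf : f ≠ 0)
    (h : ¬ f.Separable) : ∃ α, f.IsRoot α ∧ (derivative f).IsRoot α := by
  classical
  rw [Polynomial.separable_def, ← EuclideanDomain.gcd_isUnit_iff] at h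
  set d := EuclideanDomain.gcd f (derivative f) with hdd
  have hd0 : d ≠ 0 := fun h0 => hf (EuclideanDomain.gcd_eq_zero_iff.mp h0).1
  have hdeg : d.degree ≠ 0 := fun h0 => h (isUnit_iff_degree_eq_zero.mpr h0)
  obtain ⟨α, hα⟩ := IsAlgClosed.exists_root d hdeg
  exact ⟨α, hα.dvd (EuclideanDomain.gcd_dvd_left _ _),
    hα.dvd (EuclideanDomain.gcd_dvd_right _ _)⟩

theorem stmt_12 (γ : ℚ) (hγ : 0 ≤ padicValRat 2 γ) (i : ℕ) :
    (tpoly γ i).Separable := by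
  haveI : Fact (Nat.Prime 2) := ⟨Nat.prime_two⟩
  -- γ is a 2-adic integer
  have hnorm : ‖((γ : ℚ) : ℚ_[2])‖ ≤ 1 := by
    rw [Padic.eq_padicNorm]
    rcases eq_or_ne γ 0 with h0 | h0
    · simp [h0]
    · rw [padicNorm.eq_zpow_of_nonzero h0]
      push_cast
      exact zpow_le_one_of_nonpos₀ (by norm_num) (by omega)
  set g : ℤ_[2] := ⟨(γ : ℚ_[2]), hnorm⟩ with hg
  set Ω := AlgebraicClosure ℚ_[2] with hΩ
  -- reduce to separability over Ω
  rw [← Polynomial.separable_map (algebraMap ℚ Ω), tpoly_eq_Tpoly, Tpoly_map]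
  set γΩ : Ω := algebraMap ℚ Ω γ with hγΩ
  have hγΩ' : γΩ = algebraMap ℤ_[2] Ω g := by
    have h1 : algebraMap ℚ Ω = (algebraMap ℚ_[2] Ω).comp (algebraMap ℚ ℚ_[2]) :=
      Subsingleton.elim _ _
    have h2 : algebraMap ℤ_[2] Ω g = algebraMap ℚ_[2] Ω (algebraMap ℤ_[2] ℚ_[2] g) :=
      (IsScalarTower.algebraMap_apply ℤ_[2] ℚ_[2] Ω g)
    have h3 : algebraMap ℤ_[2] ℚ_[2] g = (γ : ℚ_[2]) := rfl
    have h4 : algebraMap ℚ ℚ_[2] γ = (γ : ℚ_[2]) := eq_ratCast _ γ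
    rw [hγΩ, h1, h2, h3, RingHom.comp_apply, h4]
  -- the polynomial over Ω comes from ℤ_[2]
  have hmap : Tpoly γΩ i = (Tpoly g i).map (algebraMap ℤ_[2] Ω) := by
    rw [Tpoly_map, hγΩ']
  by_contra hns
  have hmonic : (Tpoly g i).Monic := (Tpoly_monic g i).1
  have hfne : Tpoly γΩ i ≠ 0 := by
    rw [hmap]; exact (hmonic.map _).ne_zero
  obtain ⟨α, hroot, hroot'⟩ := exists_common_root hfne hns
  -- α is integral over ℤ_[2]
  have hα : IsIntegral ℤ_[2] α := by
    refine ⟨Tpoly g i, hmonic, ?_⟩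
    rw [eval₂_eq_eval_map, ← hmap]
    exact hroot
  -- the derivative evaluates to 2*u+1 with u integral
  obtain ⟨Q, hQ⟩ := Tpoly_derivative g i
  have hder : derivative (Tpoly γΩ i) = C 2 * (Q.map (algebraMap ℤ_[2] Ω)) + 1 := by
    rw [hmap, derivative_map, hQ, Polynomial.map_add, Polynomial.map_mul,
      Polynomial.map_one, Polynomial.map_C, map_ofNat]
  set u : Ω := eval α (Q.map (algebraMap ℤ_[2] Ω)) with hu
  have hequ : 2 * u + 1 = 0 := by
    have := hroot'
    rw [hder] at this
    simpa [IsRoot, hu] using this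
  have huint : IsIntegral ℤ_[2] u := by
    have h1 : u = aeval α Q := by rw [hu, aeval_def, eval₂_eq_eval_map]
    have hmem : aeval α Q ∈ Algebra.adjoin ℤ_[2] ({α} : Set Ω) := by
      rw [Algebra.adjoin_singleton_eq_range_aeval]
      exact ⟨Q, rfl⟩
    have hle : Algebra.adjoin ℤ_[2] ({α} : Set Ω) ≤ integralClosure ℤ_[2] Ω :=
      Algebra.adjoin_le_iff.mpr (by
        intro x hx
        rw [Set.mem_singleton_iff] at hx
        subst hx
        exact (mem_integralClosure_iff ℤ_[2] Ω).mpr hα)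
    rw [h1]
    exact (mem_integralClosure_iff ℤ_[2] Ω).mp (hle hmem)
  -- hence u = -(1/2), impossible
  have h2ne : (2 : Ω) ≠ 0 := two_ne_zero
  have hueq : u = algebraMap ℚ_[2] Ω (-(2⁻¹ : ℚ_[2])) := by
    apply mul_left_cancel₀ h2ne
    have : (2 : Ω) * algebraMap ℚ_[2] Ω (-(2⁻¹ : ℚ_[2])) = -1 := by
      rw [show (2 : Ω) = algebraMap ℚ_[2] Ω 2 from (map_ofNat _ 2).symm, ← map_mul]
      norm_num
    rw [this]
    linear_combination hequ
  rw [hueq, isIntegral_algebraMap_iff (algebraMap ℚ_[2] Ω).injective] at huint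
  obtain ⟨y, hy⟩ := IsIntegrallyClosed.isIntegral_iff.mp huint
  have hy1 : ‖(y : ℚ_[2])‖ ≤ 1 := y.2
  have : ‖(-(2⁻¹ : ℚ_[2]))‖ = 2 := by
    rw [norm_neg, norm_inv]
    rw [show ((2 : ℚ_[2])) = ((2 : ℕ) : ℚ_[2]) by norm_num]
    rw [Padic.norm_p]
    norm_num
  rw [show (algebraMap ℤ_[2] ℚ_[2] y) = (y : ℚ_[2]) from rfl] at hy
  rw [hy, this] at hy1
  norm_num at hy1
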